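/- For f ∈ CHⁿ_Hopf(A,A), the homotopy-G-algebra differential d(f) = π{f} − (−1)^{n−1} f{π} satisfies d_CH(f) = (−1)^{n+1} d(f), where d_CH is the Hopf-Hochschild differential induced from the bar complex differential. Explicitly, ((−1)^{n+1} d f)(a₀ ⊗ ⋯ ⊗ a_{n+2}) = f(a₀a₁ ⊗ a₂ ⊗ ⋯ ⊗ a_{n+2}) + Σ_{i=1}^{n} (−1)ⁱ f(a₀ ⊗ ⋯ ⊗ aᵢa_{i+1} ⊗ ⋯ ⊗ a_{n+2}) + (−1)^{n+1} f(a₀ ⊗ ⋯ ⊗ aₙ ⊗ a_{n+1}a_{n+2}). -/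

import Mathlib

open TensorProduct

noncomputable section ModuleAlgebraDeligne

universe u

variable (K A H : Type u)

/-- An `H`-module-algebra structure on `A`: an `H`-action by `K`-linear maps making `A`
an `H`-module, such that multiplication and unit of `A` are `H`-linear
(the Sweedler sum `∑ (b₍₁₎a₁)(b₍₂₎a₂)` is expressed via `Coalgebra.comul`). -/
structure ModAlg [Field K] [Ring A] [Algebra K A] [Ring H] [Bialgebra K H] where
  act : H →ₗ[K] A →ₗ[K] A
  act_one : ∀ a : A, act 1 a = a
  act_mul : ∀ (b c : H) (a : A), act (b * c) a = act b (act c a)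
  act_unit : ∀ b : H, act b (1 : A) = (Coalgebra.counit (R := K) b) • (1 : A)
  act_alg : ∀ (b : H) (a₁ a₂ : A),
    act b (a₁ * a₂) =
      LinearMap.mul' K A
        ((TensorProduct.homTensorHomMap (RingHom.id K) A A A A)
          (TensorProduct.map act act (Coalgebra.comul (R := K) b)) (a₁ ⊗ₜ[K] a₂))

variable [Field K] [Ring A] [Algebra K A] [Ring H] [Bialgebra K H]

/-- The defining formula of the crossed product multiplication on `X = A ⊗ A ⊗ H`:
`(a₁ ⊗ a₁' ⊗ b¹)(a₂ ⊗ a₂' ⊗ b²) = ∑ a₁(b¹₍₁₎a₂) ⊗ (b¹₍₃₎a₂')a₁' ⊗ b¹₍₂₎b²`. -/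
def XMulFormula (act : H →ₗ[K] A →ₗ[K] A)
    (mul : (A ⊗[K] (A ⊗[K] H)) →ₗ[K] (A ⊗[K] (A ⊗[K] H)) →ₗ[K] (A ⊗[K] (A ⊗[K] H))) :
    Prop :=
  ∀ (a₁ a₁' : A) (b₁ : H) (a₂ a₂' : A) (b₂ : H),
    mul (a₁ ⊗ₜ[K] (a₁' ⊗ₜ[K] b₁)) (a₂ ⊗ₜ[K] (a₂' ⊗ₜ[K] b₂)) =
      TensorProduct.map
        (LinearMap.mulLeft K a₁ ∘ₗ act.flip a₂)
        ((TensorProduct.map (LinearMap.mulRight K a₁' ∘ₗ act.flip a₂')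
            (LinearMap.mulRight K b₂)) ∘ₗ (TensorProduct.comm K H H).toLinearMap)
        ((LinearMap.lTensor H (Coalgebra.comul (R := K)) ∘ₗ Coalgebra.comul (R := K)) b₁)

/-- Iterated tensor power `A^{⊗(n+1)}` (so `Tpow K A n` has `n+1` tensor factors),
bundled with its module structure. -/
def TpowAux : ℕ → Σ' (T : Type u) (_ : AddCommGroup T), Module K T
  | 0 => ⟨A, inferInstance, inferInstance⟩
  | n + 1 =>
    letI T := TpowAux n
    letI : AddCommGroup T.1 := T.2.1
    letI : Module K T.1 := T.2.2
    ⟨A ⊗[K] T.1, inferInstance, inferInstance⟩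

/-- `Tpow K A n = A^{⊗(n+1)}`. -/
def Tpow (n : ℕ) : Type u := (TpowAux K A n).1

instance instTpowAuxACG (n : ℕ) : AddCommGroup (TpowAux K A n).1 := (TpowAux K A n).2.1
instance instTpowAuxMod (n : ℕ) : Module K (TpowAux K A n).1 := (TpowAux K A n).2.2
instance (n : ℕ) : AddCommGroup (Tpow K A n) := (TpowAux K A n).2.1
instance (n : ℕ) : Module K (Tpow K A n) := (TpowAux K A n).2.2

/-- Cast between equal tensor powers (identity when `m = n`, junk `0` otherwise). -/
def tmap (m n : ℕ) : Tpow K A m →ₗ[K] Tpow K A n :=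
  if h : m = n then by subst h; exact LinearMap.id else 0

/-- Left multiplication by an element of `A` on the first tensor factor. -/
def lmulL : ∀ n : ℕ, A →ₗ[K] Tpow K A n →ₗ[K] Tpow K A n
  | 0 => LinearMap.mul K A
  | n + 1 =>
    (LinearMap.rTensorHom (R := K) (M := Tpow K A n) (N := A) (P := A)) ∘ₗ
      LinearMap.mul K A

/-- Right multiplication by an element of `A` on the last tensor factor. -/
def rmulL : ∀ n : ℕ, A →ₗ[K] Tpow K A n →ₗ[K] Tpow K A n
  | 0 => (LinearMap.mul K A).flip
  | n + 1 =>
    (LinearMap.lTensorHom (R := K) (M := A) (N := Tpow K A n) (P := Tpow K A n)) ∘ₗ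
      rmulL n

/-- Componentwise action of `H^{⊗(n+1)}` on `A^{⊗(n+1)}` induced by an action of `H` on `A`. -/
def tact (act : H →ₗ[K] A →ₗ[K] A) :
    ∀ n : ℕ, Tpow K H n →ₗ[K] Tpow K A n →ₗ[K] Tpow K A n
  | 0 => act
  | n + 1 =>
    (TensorProduct.homTensorHomMap (RingHom.id K) A (Tpow K A n) A (Tpow K A n)) ∘ₗ
      TensorProduct.map act (tact act n)

/-- Iterated comultiplication `Δⁿ : H → H^{⊗(n+1)}`. -/
def itComul : ∀ n : ℕ, H →ₗ[K] Tpow K H n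
  | 0 => LinearMap.id
  | n + 1 => LinearMap.lTensor H (itComul n) ∘ₗ Coalgebra.comul (R := K)

/-- The action of the pure tensor `a ⊗ a' ⊗ b ∈ X = A ⊗ A ⊗ H` on `A^{⊗(n+1)}`:
`(a ⊗ a' ⊗ b)(a₀ ⊗ ⋯ ⊗ aₙ) = ∑ a b₍₁₎a₀ ⊗ b₍₂₎a₁ ⊗ ⋯ ⊗ b₍ₙ₊₁₎aₙ a'`. -/
def xActP (act : H →ₗ[K] A →ₗ[K] A) (n : ℕ) (a a' : A) (b : H) :
    Tpow K A n →ₗ[K] Tpow K A n :=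
  lmulL K A n a ∘ₗ rmulL K A n a' ∘ₗ tact K A H act n (itComul K H n b)

/-- `X`-linearity (equivariance with respect to all pure tensors of `X = A ⊗ A ⊗ H`)
of a degree-`m` Hopf-Hochschild cochain `g : A^{⊗(m+2)} → A`. -/
def IsXLinear (act : H →ₗ[K] A →ₗ[K] A) (m : ℕ) (g : Tpow K A (m + 1) →ₗ[K] A) : Prop :=
  ∀ (a a' : A) (b : H) (t : Tpow K A (m + 1)),
    g (xActP K A H act (m + 1) a a' b t) = a * act b (g t) * a'

/-- Append an element of `A` as a new last tensor factor. -/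
def appendA : ∀ n : ℕ, A →ₗ[K] Tpow K A n →ₗ[K] Tpow K A (n + 1)
  | 0 => (TensorProduct.mk K A A).flip
  | n + 1 =>
    (LinearMap.lTensorHom (R := K) (M := A) (N := Tpow K A n) (P := Tpow K A (n + 1))) ∘ₗ
      appendA n

/-- The "inner part" `g(1 ⊗ - ⊗ 1) : A^{⊗n} → A` of a cochain `g : A^{⊗(n+2)} → A`. -/
def innerC {n : ℕ} (g : Tpow K A (n + 2) →ₗ[K] A) : Tpow K A n →ₗ[K] A :=
  g ∘ₗ TensorProduct.mk K A (Tpow K A (n + 1)) 1 ∘ₗ appendA K A n 1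

/-- Consume the first `n+1` tensor factors of `A^{⊗(S+n+2)}` using a map `A^{⊗(n+1)} → A`,
leaving the remaining `A^{⊗(S+1)}`. -/
def consume : ∀ n S : ℕ,
    (Tpow K A n →ₗ[K] A) →ₗ[K] (Tpow K A (S + n + 1) →ₗ[K] A ⊗[K] Tpow K A S)
  | 0, S => LinearMap.rTensorHom (R := K) (M := Tpow K A S) (N := A) (P := A)
  | n + 1, S =>
    (TensorProduct.lift.equiv (RingHom.id K) A (Tpow K A (S + n + 1)) (A ⊗[K] Tpow K A S)).toLinearMap ∘ₗ
      (LinearMap.llcomp K A (Tpow K A n →ₗ[K] A)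
          (Tpow K A (S + n + 1) →ₗ[K] A ⊗[K] Tpow K A S) (consume n S)) ∘ₗ
        TensorProduct.lcurry (RingHom.id K) A (Tpow K A n) A

/-- An operadic "entry": a Hopf-Hochschild cochain of degree `m`,
i.e. a linear map `A^{⊗(m+2)} → A`. -/
def Entry : Type u := Σ' m : ℕ, Tpow K A (m + 1) →ₗ[K] A

/-- Total degree of a list of entries. -/
def sumA : List (Entry K A) → ℕ
  | [] => 0
  | e :: l => sumA l + e.1

/-- The block-substitution map underlying the operad structure maps `γ`. -/
def gammaAux : ∀ l : List (Entry K A), Tpow K A (sumA K A l) →ₗ[K] Tpow K A l.length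
  | [] => LinearMap.id
  | ⟨0, _⟩ :: _ => 0
  | ⟨n + 1, g⟩ :: l =>
    LinearMap.lTensor A (gammaAux l) ∘ₗ consume K A n (sumA K A l) (innerC K A g)

/-- The operad structure map `γ(f; g₁, …, g_k)` of the Hopf-Hochschild cochain operad. -/
def gamma (l : List (Entry K A)) (f : Tpow K A (l.length + 1) →ₗ[K] A) :
    Tpow K A (sumA K A l + 1) →ₗ[K] A :=
  f ∘ₗ LinearMap.lTensor A (gammaAux K A l)

/-- `γ(f; g₁, …, g_k)` with degree bookkeeping by casts: `f` has degree `k`,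
the result is regarded as a map on `Tpow K A M = A^{⊗(M+1)}`
(the casts are identities in every intended use, where `l.length = k`
and `M = sumA l + 1`). -/
def gammaD (k : ℕ) (f : Tpow K A (k + 1) →ₗ[K] A) (l : List (Entry K A)) (M : ℕ) :
    Tpow K A M →ₗ[K] A :=
  gamma K A l (f ∘ₗ tmap K A (l.length + 1) (k + 1)) ∘ₗ tmap K A M (sumA K A l + 1)

/-- The identity cochain `Id ∈ C(1)`, `a₀ ⊗ a₁ ⊗ a₂ ↦ a₀a₁a₂`. -/
def idC : Tpow K A 2 →ₗ[K] A :=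
  LinearMap.mul' K A ∘ₗ LinearMap.lTensor A (LinearMap.mul' K A)

/-- `Id` as an entry. -/
def idE : Entry K A := ⟨1, idC K A⟩

/-- The multiplication cochain `π ∈ C(2)`, `a₀ ⊗ a₁ ⊗ a₂ ⊗ a₃ ↦ a₀a₁a₂a₃`. -/
def piC : Tpow K A 3 →ₗ[K] A :=
  LinearMap.mul' K A ∘ₗ
    LinearMap.lTensor A (LinearMap.mul' K A ∘ₗ LinearMap.lTensor A (LinearMap.mul' K A))

/-- The face map `∂ⱼ : A^{⊗(n+2)} → A^{⊗(n+1)}` of the bar complex. -/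
def face : ∀ n j : ℕ, Tpow K A (n + 1) →ₗ[K] Tpow K A n
  | n, 0 => TensorProduct.lift (lmulL K A n)
  | 0, _ + 1 => TensorProduct.lift (lmulL K A 0)
  | n + 1, j + 1 => LinearMap.lTensor A (face n j)

/-- The bar differential `d_n = ∑_{j=0}^n (−1)ʲ ∂ⱼ : A^{⊗(n+2)} → A^{⊗(n+1)}`. -/
def barDiff (n : ℕ) : Tpow K A (n + 1) →ₗ[K] Tpow K A n :=
  ∑ j ∈ Finset.range (n + 1), (-1 : K) ^ j • face K A n j

end ModuleAlgebraDeligne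

noncomputable section HGDefs

universe v

variable (K A : Type v) [Field K] [Ring A] [Algebra K A]

/-- The homotopy-G-algebra differential `d(f) = π{f} − (−1)^{|f|} f{π}` on degree-`n`
Hopf-Hochschild cochains, written out via the operad structure maps and the sign
conventions of Gerstenhaber–Voronov (`|f| = n − 1`). -/
def hgDiff (n : ℕ) (f : Tpow K A (n + 1) →ₗ[K] A) : Tpow K A (n + 2) →ₗ[K] A :=
  (gammaD K A 2 (piC K A) [⟨n, f⟩, idE K A] (n + 2) +
      (-1 : K) ^ (n - 1) • gammaD K A 2 (piC K A) [idE K A, ⟨n, f⟩] (n + 2)) -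
    (-1 : K) ^ (n - 1) •
      ∑ i ∈ Finset.range n, (-1 : K) ^ i •
        gammaD K A n f
          (List.replicate i (idE K A) ++
            ⟨2, piC K A⟩ :: List.replicate (n - 1 - i) (idE K A)) (n + 2)

/-- The cup product `ψ ∪ φ = (−1)^{m+n−1} γ(π; ψ, φ)` of Hopf-Hochschild cochains of
degrees `m` and `n`. -/
def cup (m n : ℕ) (ψ : Tpow K A (m + 1) →ₗ[K] A) (φ : Tpow K A (n + 1) →ₗ[K] A) :
    Tpow K A (m + n + 1) →ₗ[K] A :=
  (-1 : K) ^ (m + n - 1) • gammaD K A 2 (piC K A) [⟨m, ψ⟩, ⟨n, φ⟩] (m + n + 1)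

/-- The brace operation `ψ{φ} = ∑_{i=1}^m (−1)^{(i−1)(n−1)} γ(ψ; Id^{i−1}, φ, Id^{m−i})`
of Hopf-Hochschild cochains of degrees `m` and `n`. -/
def braceOne (m n : ℕ) (ψ : Tpow K A (m + 1) →ₗ[K] A) (φ : Tpow K A (n + 1) →ₗ[K] A) :
    Tpow K A (m + n) →ₗ[K] A :=
  ∑ i ∈ Finset.range m, (-1 : K) ^ ((n - 1) * i) •
    gammaD K A m ψ
      (List.replicate i (idE K A) ++ ⟨n, φ⟩ :: List.replicate (m - 1 - i) (idE K A))
      (m + n)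

/-- The Gerstenhaber bracket `[ψ, φ] = ψ{φ} − (−1)^{(m−1)(n−1)} φ{ψ}`. -/
def bracketC (m n : ℕ) (ψ : Tpow K A (m + 1) →ₗ[K] A) (φ : Tpow K A (n + 1) →ₗ[K] A) :
    Tpow K A (m + n) →ₗ[K] A :=
  braceOne K A m n ψ φ -
    (-1 : K) ^ ((m - 1) * (n - 1)) • (braceOne K A n m φ ψ ∘ₗ tmap K A (m + n) (n + m))

/-- The bracket `[ψ, φ](a₀ ⊗ a₁ ⊗ a₂) = ψ(a₀ ⊗ φ(1 ⊗ a₁ ⊗ 1) ⊗ a₂) − φ(a₀ ⊗ ψ(1 ⊗ a₁ ⊗ 1) ⊗ a₂)`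
on degree-1 Hopf-Hochschild cochains. -/
def bracket1 (ψ φ : Tpow K A 2 →ₗ[K] A) : Tpow K A 2 →ₗ[K] A :=
  ψ ∘ₗ (LinearMap.lTensor A (LinearMap.rTensor A (innerC K A φ)) : Tpow K A 2 →ₗ[K] Tpow K A 2) -
    φ ∘ₗ (LinearMap.lTensor A (LinearMap.rTensor A (innerC K A ψ)) : Tpow K A 2 →ₗ[K] Tpow K A 2)

end HGDefs


noncomputable section Aux

open TensorProduct LinearMap

universe w

variable {K A : Type w} [Field K] [Ring A] [Algebra K A]

lemma tmap_self (a : ℕ) : tmap K A a a = LinearMap.id := by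
  simp [tmap]

lemma tmap_succ (a b : ℕ) :
    tmap K A (a + 1) (b + 1) = LinearMap.lTensor A (tmap K A a b) := by
  by_cases h : a = b
  · subst h; simp [tmap_self]; rfl
  · rw [tmap, tmap, dif_neg h, dif_neg (by omega : ¬ a + 1 = b + 1)]
    exact (LinearMap.lTensor_zero A).symm

lemma tmap_comp₁ {a b : ℕ} (c : ℕ) (h : a = b) :
    tmap K A b c ∘ₗ tmap K A a b = tmap K A a c := by
  subst h; simp [tmap_self]

lemma tmap_comp₂ {b c : ℕ} (a : ℕ) (h : b = c) :
    tmap K A b c ∘ₗ tmap K A a b = tmap K A a c := by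
  subst h; simp [tmap_self]


theorem Tpow_induction_on {m : ℕ} {motive : Tpow K A (m + 1) → Prop} (v : Tpow K A (m + 1))
    (zero : motive 0) (tmul : ∀ (x : A) (t : Tpow K A m), motive (x ⊗ₜ[K] t : A ⊗[K] Tpow K A m))
    (add : ∀ x y, motive x → motive y → motive (x + y)) : motive v := by
  induction v using TensorProduct.induction_on with
  | zero => exact zero
  | tmul x t => exact tmul x t
  | add x y hx hy => exact add x y hx hy

/-- Concatenation `A^{⊗(m+1)} ⊗ A^{⊗(S+1)} → A^{⊗(S+m+2)}`. -/
def cat : ∀ (m S : ℕ), Tpow K A m →ₗ[K] Tpow K A S →ₗ[K] Tpow K A (S + m + 1)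
  | 0, S => TensorProduct.mk K A (Tpow K A S)
  | m + 1, S =>
    TensorProduct.lift
      ((LinearMap.lcomp K (Tpow K A S →ₗ[K] Tpow K A (S + m + 1 + 1)) (cat m S)) ∘ₗ
        ((LinearMap.llcomp K (Tpow K A S) (Tpow K A (S + m + 1)) (Tpow K A (S + m + 1 + 1))) ∘ₗ
          (TensorProduct.mk K A (Tpow K A (S + m + 1)))))

lemma cat_zero_apply (S : ℕ) (a : A) (u : Tpow K A S) :
    cat 0 S a u = (a ⊗ₜ[K] u : A ⊗[K] Tpow K A S) := rfl

lemma cat_succ_apply (m S : ℕ) (x : A) (t : Tpow K A m) (u : Tpow K A S) :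
    cat (m + 1) S (x ⊗ₜ[K] t : A ⊗[K] Tpow K A m) u =
      (x ⊗ₜ[K] cat m S t u : A ⊗[K] Tpow K A (S + m + 1)) := rfl

lemma consume_zero_apply (S : ℕ) (G : Tpow K A 0 →ₗ[K] A) (a : A) (u : Tpow K A S) :
    consume K A 0 S G (a ⊗ₜ[K] u : A ⊗[K] Tpow K A S) = G a ⊗ₜ[K] u := rfl

lemma consume_succ_apply (m S : ℕ) (G : Tpow K A (m + 1) →ₗ[K] A) (x : A)
    (w : Tpow K A (S + m + 1)) :
    consume K A (m + 1) S G (x ⊗ₜ[K] w : A ⊗[K] Tpow K A (S + m + 1)) =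
      consume K A m S ((TensorProduct.lcurry (RingHom.id K) A (Tpow K A m) A G) x) w := rfl

lemma consume_cat (m S : ℕ) (G : Tpow K A m →ₗ[K] A) (t : Tpow K A m) (u : Tpow K A S) :
    consume K A m S G (cat m S t u) = G t ⊗ₜ[K] u := by
  induction m with
  | zero => rfl
  | succ m ih =>
    induction t using Tpow_induction_on with
    | tmul x t' =>
      rw [cat_succ_apply, consume_succ_apply, ih]
      rfl
    | zero => simp
    | add x y hx hy => simp [map_add, TensorProduct.add_tmul, hx, hy]

lemma appendA_zero_apply (c a : A) : appendA K A 0 c a = a ⊗ₜ[K] c := rfl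

lemma appendA_succ_apply (k : ℕ) (c x : A) (t : Tpow K A k) :
    appendA K A (k + 1) c (x ⊗ₜ[K] t : A ⊗[K] Tpow K A k) =
      (x ⊗ₜ[K] appendA K A k c t : A ⊗[K] Tpow K A (k + 1)) := rfl

lemma appendA_ind :
    ∀ {m : ℕ} {P : Tpow K A (m + 1) → Prop}
      (h0 : P 0) (hadd : ∀ x y, P x → P y → P (x + y))
      (hp : ∀ (a' : A) (t : Tpow K A m), P (appendA K A m a' t)), ∀ v, P v := by
  intro m
  induction m with
  | zero =>
    intro P h0 hadd hp v
    induction v using Tpow_induction_on with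
    | tmul a c => exact hp c a
    | zero => exact h0
    | add x y hx hy => exact hadd x y hx hy
  | succ m ih =>
    intro P h0 hadd hp v
    induction v using Tpow_induction_on with
    | tmul a w =>
      refine ih (P := fun w => P (a ⊗ₜ[K] w : A ⊗[K] Tpow K A (m + 1))) ?_ ?_ ?_ w
      · exact (congrArg P (TensorProduct.tmul_zero (M := A) (N := Tpow K A (m + 1)) a)).mpr h0
      · intro x y hx hy; rw [TensorProduct.tmul_add]; exact hadd _ _ hx hy
      · intro a' t; exact hp a' (a ⊗ₜ[K] t)
    | zero => exact h0
    | add x y hx hy => exact hadd x y hx hy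

lemma cat_ind {S : ℕ} :
    ∀ {m : ℕ} {P : Tpow K A (S + m + 1) → Prop}
      (h0 : P 0) (hadd : ∀ x y, P x → P y → P (x + y))
      (hp : ∀ (t : Tpow K A m) (u : Tpow K A S), P (cat m S t u)), ∀ v, P v := by
  intro m
  induction m with
  | zero =>
    intro P h0 hadd hp v
    induction v using Tpow_induction_on with
    | tmul a u => exact hp a u
    | zero => exact h0
    | add x y hx hy => exact hadd x y hx hy
  | succ m ih =>
    intro P h0 hadd hp v
    induction v using Tpow_induction_on with
    | tmul a w =>
      refine ih (P := fun w => P (a ⊗ₜ[K] w : A ⊗[K] Tpow K A (S + m + 1))) ?_ ?_ ?_ w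
      · exact (congrArg P (TensorProduct.tmul_zero (M := A) (N := Tpow K A (S + m + 1)) a)).mpr h0
      · intro x y hx hy; rw [TensorProduct.tmul_add]; exact hadd _ _ hx hy
      · intro t u; rw [← cat_succ_apply]; exact hp (a ⊗ₜ[K] t) u
    | zero => exact h0
    | add x y hx hy => exact hadd x y hx hy

lemma idC_apply (a b c : A) : idC K A (a ⊗ₜ[K] (b ⊗ₜ[K] c)) = a * (b * c) := rfl

lemma piC_apply (a b c d : A) :
    piC K A (a ⊗ₜ[K] (b ⊗ₜ[K] (c ⊗ₜ[K] d))) = a * (b * (c * d)) := rfl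

lemma innerC_apply {n : ℕ} (g : Tpow K A (n + 2) →ₗ[K] A) (t : Tpow K A n) :
    innerC K A g t = g ((1 : A) ⊗ₜ[K] appendA K A n 1 t : A ⊗[K] Tpow K A (n + 1)) := rfl

lemma innerC_idC : innerC K A (idC K A) = LinearMap.id := by
  ext a
  refine Eq.trans (b := @HMul.hMul A A A instHMul 1 (@HMul.hMul A A A instHMul a 1)) rfl ?_
  refine (one_mul _).trans ((mul_one _).trans ?_)
  exact rfl

lemma innerC_piC : innerC K A (piC K A) = LinearMap.mul' K A := by
  apply TensorProduct.ext'
  intro a b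
  refine Eq.trans
    (b := @HMul.hMul A A A instHMul 1
      (@HMul.hMul A A A instHMul a (@HMul.hMul A A A instHMul b 1))) rfl ?_
  refine Eq.trans ?_ (rfl : @HMul.hMul A A A instHMul a b = LinearMap.mul' K A (a ⊗ₜ[K] b))
  exact (one_mul _).trans (congrArg (fun z : A => a * z) (mul_one (M := A) b))

lemma lmulL_zero_apply (a b : A) : lmulL K A 0 a b = a * b := rfl

lemma lmulL_succ_apply (k : ℕ) (a x : A) (u : Tpow K A k) :
    lmulL K A (k + 1) a (x ⊗ₜ[K] u : A ⊗[K] Tpow K A k) = ((a * x) ⊗ₜ[K] u : A ⊗[K] Tpow K A k) := rfl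

lemma face_succ_succ (k r : ℕ) :
    face K A (k + 1) (r + 1) = LinearMap.lTensor A (face K A k r) := rfl

lemma face_zero_apply (k : ℕ) (a : A) (u : Tpow K A k) :
    face K A k 0 (a ⊗ₜ[K] u : A ⊗[K] Tpow K A k) = lmulL K A k a u := by
  cases k <;> rfl

lemma rmulL_tmul (k : ℕ) (a' x : A) (u : Tpow K A k) :
    rmulL K A (k + 1) a' (x ⊗ₜ[K] u : A ⊗[K] Tpow K A k) = (x ⊗ₜ[K] rmulL K A k a' u : A ⊗[K] Tpow K A k) := rfl

lemma rmulL_appendA (k : ℕ) (a' c : A) (t : Tpow K A k) :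
    rmulL K A (k + 1) a' (appendA K A k c t) = appendA K A k (c * a') t := by
  induction k with
  | zero => rfl
  | succ k ih =>
    induction t using Tpow_induction_on with
    | tmul x t' =>
      rw [appendA_succ_apply, rmulL_tmul, ih, appendA_succ_apply]
    | zero => simp
    | add x y hx hy => simp only [map_add, hx, hy]

lemma consume_zero_id (S : ℕ) :
    consume K A 0 S LinearMap.id = LinearMap.id := LinearMap.rTensor_id _ _

lemma gammaAux_nil : gammaAux K A [] = LinearMap.id := rfl

lemma gammaAux_cons (m : ℕ) (g : Tpow K A (m + 2) →ₗ[K] A) (l : List (Entry K A)) :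
    gammaAux K A (⟨m + 1, g⟩ :: l) =
      LinearMap.lTensor A (gammaAux K A l) ∘ₗ consume K A m (sumA K A l) (innerC K A g) := rfl

lemma gammaAux_cons_idE (l : List (Entry K A)) :
    gammaAux K A (idE K A :: l) = LinearMap.lTensor A (gammaAux K A l) := by
  show gammaAux K A (⟨0 + 1, idC K A⟩ :: l) = LinearMap.lTensor A (gammaAux K A l)
  rw [gammaAux_cons, innerC_idC, consume_zero_id]
  exact LinearMap.comp_id _

lemma tmap_tmul (a b : ℕ) (x : A) (w : Tpow K A a) :
    tmap K A (a + 1) (b + 1) (x ⊗ₜ[K] w : A ⊗[K] Tpow K A a) = (x ⊗ₜ[K] tmap K A a b w : A ⊗[K] Tpow K A b) := by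
  rw [tmap_succ]; rfl

lemma face_tmap (a b r : ℕ) :
    face K A b r ∘ₗ tmap K A (a + 1) (b + 1) = tmap K A a b ∘ₗ face K A a r := by
  by_cases h : a = b
  · subst h; simp [tmap_self]
  · rw [tmap, tmap, dif_neg h, dif_neg (fun hc => h (by omega))]
    ext v
    simp

lemma tmap_appendA (m : ℕ) (a' : A) (t : Tpow K A m) :
    tmap K A (m + 1) (0 + m + 1) (appendA K A m a' t) = cat m 0 t a' := by
  induction m with
  | zero => rfl
  | succ m ih =>
    induction t using Tpow_induction_on with
    | tmul x t' =>
      rw [appendA_succ_apply, tmap_tmul, cat_succ_apply m 0 x t' a']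
      exact congrArg (fun z : Tpow K A (0 + m + 1) => x ⊗ₜ[K] z) (ih t')
    | zero => simp; rfl
    | add x y hx hy => simp only [map_add, TensorProduct.add_tmul, hx, hy,
        LinearMap.map_add, LinearMap.add_apply]; rfl

lemma tmap_appendA₂ (m : ℕ) (a a' : A) (t : Tpow K A m) :
    tmap K A (m + 2) (1 + m + 1) (appendA K A (m + 1) a' (appendA K A m a t)) =
      cat m 1 t (a ⊗ₜ[K] a') := by
  induction m with
  | zero => rfl
  | succ m ih =>
    induction t using Tpow_induction_on with
    | tmul x t' =>
      rw [appendA_succ_apply, appendA_succ_apply, tmap_tmul, cat_succ_apply m 1 x t' (a ⊗ₜ[K] a')]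
      exact congrArg (fun z : Tpow K A (1 + m + 1) => x ⊗ₜ[K] z) (ih t')
    | zero => simp; rfl
    | add x y hx hy => simp only [map_add, TensorProduct.add_tmul, hx, hy,
        LinearMap.map_add, LinearMap.add_apply]; rfl

lemma face_top_appendA (k : ℕ) (a a' : A) (u : Tpow K A k) :
    face K A (k + 1) (k + 1) (appendA K A (k + 1) a' (appendA K A k a u)) =
      appendA K A k (a * a') u := by
  induction k with
  | zero => rfl
  | succ k ih =>
    induction u using Tpow_induction_on with
    | tmul x u' =>
      exact congrArg (fun z : Tpow K A (k + 1) => x ⊗ₜ[K] z) (ih u')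
    | zero => simp
    | add x y hx hy => simp only [map_add, TensorProduct.add_tmul, hx, hy,
        LinearMap.map_add, LinearMap.add_apply]

lemma consume_one_mul' (S : ℕ) :
    consume K A 1 S (LinearMap.mul' K A) = face K A (S + 1) 0 := by
  apply TensorProduct.ext'
  intro x w
  exact (consume_succ_apply 0 S (LinearMap.mul' K A) x w).trans
    (face_zero_apply (S + 1) x w).symm

lemma comp_sum_smul {N : ℕ} (φ : Tpow K A N →ₗ[K] A) (s : Finset ℕ)
    (g : ℕ → (Tpow K A (N + 1) →ₗ[K] Tpow K A N)) :
    φ ∘ₗ (∑ j ∈ s, ((-1 : K) ^ j • g j)) = ∑ j ∈ s, ((-1 : K) ^ j • (φ ∘ₗ g j)) := by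
  apply LinearMap.ext
  intro v
  simp [LinearMap.sum_apply, map_sum, map_smul]

lemma lin_tmul_add {n : ℕ} (g h : Tpow K A (n + 1) →ₗ[K] A) (a : A) (x y : Tpow K A n)
    (hx : g (a ⊗ₜ[K] x : A ⊗[K] Tpow K A n) = h (a ⊗ₜ[K] x : A ⊗[K] Tpow K A n))
    (hy : g (a ⊗ₜ[K] y : A ⊗[K] Tpow K A n) = h (a ⊗ₜ[K] y : A ⊗[K] Tpow K A n)) :
    g (a ⊗ₜ[K] (x + y) : A ⊗[K] Tpow K A n) = h (a ⊗ₜ[K] (x + y) : A ⊗[K] Tpow K A n) := by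
  have eg := (congrArg g (TensorProduct.tmul_add a x y)).trans (map_add g _ _)
  have eh := (congrArg h (TensorProduct.tmul_add a x y)).trans (map_add h _ _)
  rw [eg, eh, hx, hy]

lemma lin_tmul_zero {n : ℕ} (g h : Tpow K A (n + 1) →ₗ[K] A) (a : A) :
    g (a ⊗ₜ[K] (0 : Tpow K A n) : A ⊗[K] Tpow K A n) = h (a ⊗ₜ[K] (0 : Tpow K A n) : A ⊗[K] Tpow K A n) := by
  have eg := (congrArg g (TensorProduct.tmul_zero (M := A) (N := Tpow K A n) a)).trans (map_zero g)
  have eh := (congrArg h (TensorProduct.tmul_zero (M := A) (N := Tpow K A n) a)).trans (map_zero h)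
  exact eg.trans eh.symm

section Act

variable {H : Type w} [Ring H] [Bialgebra K H]

lemma act_one_map (M : ModAlg K A H) : M.act 1 = LinearMap.id :=
  LinearMap.ext M.act_one

lemma tact_itComul_one (M : ModAlg K A H) (k : ℕ) :
    tact K A H M.act k (itComul K H k 1) = LinearMap.id := by
  induction k with
  | zero => exact act_one_map M
  | succ k ih =>
    have h1 : itComul K H (k + 1) (1 : H) = ((1 : H) ⊗ₜ[K] itComul K H k 1 : H ⊗[K] Tpow K H k) := by
      show LinearMap.lTensor H (itComul K H k) (Coalgebra.comul (R := K) (1 : H)) = _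
      rw [Bialgebra.comul_one, Algebra.TensorProduct.one_def]
      rfl
    rw [h1]
    have h2 : tact K A H M.act (k + 1) ((1 : H) ⊗ₜ[K] itComul K H k 1 : H ⊗[K] Tpow K H k) =
        TensorProduct.map (M.act 1) (tact K A H M.act k (itComul K H k 1)) := rfl
    rw [h2, ih, act_one_map, TensorProduct.map_id]
    rfl

lemma star_f (M : ModAlg K A H) {m : ℕ} (f : Tpow K A (m + 2) →ₗ[K] A)
    (hf : IsXLinear K A H M.act (m + 1) f) (a a' : A) (t : Tpow K A m) :
    f (a ⊗ₜ[K] appendA K A m a' t : A ⊗[K] Tpow K A (m + 1)) = a * innerC K A f t * a' := by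
  have h := hf a a' 1 ((1 : A) ⊗ₜ[K] appendA K A m 1 t : A ⊗[K] Tpow K A (m + 1))
  have hx : xActP K A H M.act (m + 1 + 1) a a' 1 ((1 : A) ⊗ₜ[K] appendA K A m 1 t : A ⊗[K] Tpow K A (m + 1))
      = (a ⊗ₜ[K] appendA K A m a' t : A ⊗[K] Tpow K A (m + 1)) := by
    simp only [xActP, LinearMap.comp_apply, tact_itComul_one, LinearMap.id_coe, id_eq]
    show lmulL K A (m + 1 + 1) a (rmulL K A (m + 1 + 1) a'
      ((1 : A) ⊗ₜ[K] appendA K A m 1 t : A ⊗[K] Tpow K A (m + 1))) = _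
    rw [rmulL_tmul, rmulL_appendA, lmulL_succ_apply, one_mul, mul_one]
  rw [hx] at h
  rw [h, act_one_map]
  rfl

lemma lemL3 (M : ModAlg K A H) (m : ℕ) (f : Tpow K A (m + 1 + 1) →ₗ[K] A)
    (hf : IsXLinear K A H M.act (m + 1) f) :
    gammaD K A 2 (piC K A) [⟨m + 1, f⟩, idE K A] (m + 1 + 2) =
      f ∘ₗ face K A (m + 1 + 1) (m + 1 + 1) := by
  have hsingle : gammaAux K A [idE K A] = LinearMap.id := by
    rw [gammaAux_cons_idE, gammaAux_nil]
    exact LinearMap.lTensor_id ..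
  have hg : ∀ (a a' : A) (t : Tpow K A m),
      gammaAux K A [⟨m + 1, f⟩, idE K A]
        (tmap K A (m + 2) (sumA K A [(⟨m + 1, f⟩ : Entry K A), idE K A])
          (appendA K A (m + 1) a' (appendA K A m a t))) =
        innerC K A f t ⊗ₜ[K] (a ⊗ₜ[K] a') := by
    intro a a' t
    have h1 : gammaAux K A [⟨m + 1, f⟩, idE K A]
        (tmap K A (m + 2) (sumA K A [(⟨m + 1, f⟩ : Entry K A), idE K A])
          (appendA K A (m + 1) a' (appendA K A m a t))) =
        gammaAux K A [⟨m + 1, f⟩, idE K A] (cat m 1 t (a ⊗ₜ[K] a')) :=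
      congrArg _ (tmap_appendA₂ m a a' t)
    have h2 : gammaAux K A [⟨m + 1, f⟩, idE K A] (cat m 1 t (a ⊗ₜ[K] a')) =
        LinearMap.lTensor A (gammaAux K A [idE K A])
          (consume K A m (sumA K A [idE K A]) (innerC K A f) (cat m 1 t (a ⊗ₜ[K] a'))) := by
      rw [gammaAux_cons]
      rfl
    have h3 : consume K A m (sumA K A [idE K A]) (innerC K A f) (cat m 1 t (a ⊗ₜ[K] a')) =
        innerC K A f t ⊗ₜ[K] (a ⊗ₜ[K] a') :=
      consume_cat m 1 (innerC K A f) t (a ⊗ₜ[K] a')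
    refine (h1.trans h2).trans ?_
    refine (congrArg _ h3).trans ?_
    rw [hsingle]
    exact LinearMap.lTensor_id_apply ..
  have hval : ∀ w : Tpow K A (m + 1 + 2),
      gammaD K A 2 (piC K A) [⟨m + 1, f⟩, idE K A] (m + 1 + 2) w =
        piC K A (LinearMap.lTensor A (gammaAux K A [⟨m + 1, f⟩, idE K A])
          (tmap K A (m + 1 + 2) (sumA K A [(⟨m + 1, f⟩ : Entry K A), idE K A] + 1) w)) :=
    fun w => rfl
  apply LinearMap.ext
  intro v
  induction v using Tpow_induction_on with
  | zero => simp
  | add x y hx hy => rw [map_add, map_add, hx, hy]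
  | tmul a₀ w =>
    induction w using appendA_ind with
    | h0 => simp; exact (map_zero _).trans (map_zero (f ∘ₗ face K A (m + 1 + 1) (m + 1 + 1))).symm
    | hadd x y hx hy => exact lin_tmul_add _ _ a₀ _ _ hx hy
    | hp a' w' =>
      induction w' using appendA_ind with
      | h0 => simp; exact (map_zero _).trans (map_zero (f ∘ₗ face K A (m + 1 + 1) (m + 1 + 1))).symm
      | hadd x y hx hy =>
        rw [map_add]
        exact lin_tmul_add _ _ a₀ _ _ hx hy
      | hp a t =>
        calc gammaD K A 2 (piC K A) [⟨m + 1, f⟩, idE K A] (m + 1 + 2)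
              (a₀ ⊗ₜ[K] appendA K A (m + 1) a' (appendA K A m a t))
            = piC K A (a₀ ⊗ₜ[K] gammaAux K A [⟨m + 1, f⟩, idE K A]
                (tmap K A (m + 2) (sumA K A [(⟨m + 1, f⟩ : Entry K A), idE K A])
                  (appendA K A (m + 1) a' (appendA K A m a t)))) := by
              refine Eq.trans (hval _) ?_
              exact congrArg (fun z => piC K A z)
                (congrArg (fun z => LinearMap.lTensor A
                    (gammaAux K A [(⟨m + 1, f⟩ : Entry K A), idE K A]) z)
                  (tmap_tmul (m + 1 + 1) (sumA K A [(⟨m + 1, f⟩ : Entry K A), idE K A]) a₀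
                    (appendA K A (m + 1) a' (appendA K A m a t))))
          _ = piC K A (a₀ ⊗ₜ[K] (innerC K A f t ⊗ₜ[K] (a ⊗ₜ[K] a'))) :=
              congrArg (fun z => piC K A (a₀ ⊗ₜ[K] z)) (hg a a' t)
          _ = a₀ * (innerC K A f t * (a * a')) := rfl
          _ = a₀ * innerC K A f t * (a * a') := by rw [mul_assoc]
          _ = f (a₀ ⊗ₜ[K] appendA K A m (a * a') t) := (star_f M f hf a₀ (a * a') t).symm
          _ = (f ∘ₗ face K A (m + 1 + 1) (m + 1 + 1))
                (a₀ ⊗ₜ[K] appendA K A (m + 1) a' (appendA K A m a t)) :=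
              (congrArg (fun z : Tpow K A (m + 1) => f (a₀ ⊗ₜ[K] z))
                (face_top_appendA m a a' t)).symm

lemma lemL1 (M : ModAlg K A H) (m : ℕ) (f : Tpow K A (m + 1 + 1) →ₗ[K] A)
    (hf : IsXLinear K A H M.act (m + 1) f) :
    gammaD K A 2 (piC K A) [idE K A, ⟨m + 1, f⟩] (m + 1 + 2) =
      f ∘ₗ face K A (m + 1 + 1) 0 := by
  have hg : ∀ (a' : A) (t : Tpow K A m),
      gammaAux K A [⟨m + 1, f⟩]
        (tmap K A (m + 1) (sumA K A [(⟨m + 1, f⟩ : Entry K A)]) (appendA K A m a' t)) =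
        innerC K A f t ⊗ₜ[K] a' := by
    intro a' t
    have h1 : gammaAux K A [⟨m + 1, f⟩]
        (tmap K A (m + 1) (sumA K A [(⟨m + 1, f⟩ : Entry K A)]) (appendA K A m a' t)) =
        gammaAux K A [⟨m + 1, f⟩] (cat m 0 t a') :=
      congrArg _ (tmap_appendA m a' t)
    have h2 : gammaAux K A [⟨m + 1, f⟩] (cat m 0 t a') =
        LinearMap.lTensor A (gammaAux K A [])
          (consume K A m (sumA K A []) (innerC K A f) (cat m 0 t a')) := by
      rw [gammaAux_cons]
      rfl
    have h3 : consume K A m (sumA K A []) (innerC K A f) (cat m 0 t a') =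
        innerC K A f t ⊗ₜ[K] a' :=
      consume_cat m 0 (innerC K A f) t a'
    refine (h1.trans h2).trans ?_
    refine (congrArg _ h3).trans ?_
    rw [gammaAux_nil]
    exact LinearMap.lTensor_id_apply ..
  have hval : ∀ w : Tpow K A (m + 1 + 2),
      gammaD K A 2 (piC K A) [idE K A, ⟨m + 1, f⟩] (m + 1 + 2) w =
        piC K A (LinearMap.lTensor A (gammaAux K A [idE K A, ⟨m + 1, f⟩])
          (tmap K A (m + 1 + 2) (sumA K A [idE K A, (⟨m + 1, f⟩ : Entry K A)] + 1) w)) :=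
    fun w => rfl
  have hcons : ∀ (a₁ : A) (z : Tpow K A (sumA K A [(⟨m + 1, f⟩ : Entry K A)])),
      gammaAux K A [idE K A, ⟨m + 1, f⟩] (a₁ ⊗ₜ[K] z) =
        a₁ ⊗ₜ[K] gammaAux K A [(⟨m + 1, f⟩ : Entry K A)] z := by
    intro a₁ z
    rw [gammaAux_cons_idE]
    rfl
  apply LinearMap.ext
  intro v
  induction v using Tpow_induction_on with
  | zero => simp
  | add x y hx hy => rw [map_add, map_add, hx, hy]
  | tmul a₀ w =>
    induction w using Tpow_induction_on with
    | zero => simp; exact (map_zero _).trans (map_zero (f ∘ₗ face K A (m + 1 + 1) 0)).symm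
    | add x y hx hy => exact lin_tmul_add _ _ a₀ _ _ hx hy
    | tmul a₁ u =>
      induction u using appendA_ind with
      | h0 => rw [TensorProduct.tmul_zero]; exact lin_tmul_zero _ _ a₀
      | hadd x y hx hy =>
        rw [TensorProduct.tmul_add]
        exact lin_tmul_add _ _ a₀ _ _ hx hy
      | hp a' t =>
        calc gammaD K A 2 (piC K A) [idE K A, ⟨m + 1, f⟩] (m + 1 + 2)
              (a₀ ⊗ₜ[K] (a₁ ⊗ₜ[K] appendA K A m a' t))
            = piC K A (a₀ ⊗ₜ[K] gammaAux K A [idE K A, ⟨m + 1, f⟩]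
                (tmap K A (m + 1 + 1) (sumA K A [idE K A, (⟨m + 1, f⟩ : Entry K A)])
                  (a₁ ⊗ₜ[K] appendA K A m a' t))) := by
              refine Eq.trans (hval _) ?_
              exact congrArg (fun z => piC K A z)
                (congrArg (fun z => LinearMap.lTensor A
                    (gammaAux K A [idE K A, (⟨m + 1, f⟩ : Entry K A)]) z)
                  (tmap_tmul (m + 1 + 1) (sumA K A [idE K A, (⟨m + 1, f⟩ : Entry K A)]) a₀
                    (a₁ ⊗ₜ[K] appendA K A m a' t)))
          _ = piC K A (a₀ ⊗ₜ[K] (a₁ ⊗ₜ[K] gammaAux K A [(⟨m + 1, f⟩ : Entry K A)]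
                (tmap K A (m + 1) (sumA K A [(⟨m + 1, f⟩ : Entry K A)])
                  (appendA K A m a' t)))) := by
              refine congrArg (fun z => piC K A (a₀ ⊗ₜ[K] z)) ?_
              refine Eq.trans (congrArg (fun z => gammaAux K A [idE K A, (⟨m + 1, f⟩ : Entry K A)] z)
                (tmap_tmul (m + 1) (sumA K A [(⟨m + 1, f⟩ : Entry K A)]) a₁
                  (appendA K A m a' t))) ?_
              exact hcons a₁ _
          _ = piC K A (a₀ ⊗ₜ[K] (a₁ ⊗ₜ[K] (innerC K A f t ⊗ₜ[K] a'))) :=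
              congrArg (fun z => piC K A (a₀ ⊗ₜ[K] (a₁ ⊗ₜ[K] z))) (hg a' t)
          _ = a₀ * (a₁ * (innerC K A f t * a')) := rfl
          _ = a₀ * a₁ * innerC K A f t * a' := by
              rw [mul_assoc, mul_assoc]
          _ = f ((a₀ * a₁) ⊗ₜ[K] appendA K A m a' t) := (star_f M f hf (a₀ * a₁) a' t).symm
          _ = (f ∘ₗ face K A (m + 1 + 1) 0)
                (a₀ ⊗ₜ[K] (a₁ ⊗ₜ[K] appendA K A m a' t)) :=
              (congrArg f (face_zero_apply (m + 1 + 1) a₀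
                (a₁ ⊗ₜ[K] appendA K A m a' t))).symm

end Act

lemma sumA_cons (e : Entry K A) (l : List (Entry K A)) :
    sumA K A (e :: l) = sumA K A l + e.1 := rfl

lemma sumA_replicate (k : ℕ) : sumA K A (List.replicate k (idE K A)) = k := by
  induction k with
  | zero => rfl
  | succ k ih =>
    show sumA K A (idE K A :: List.replicate k (idE K A)) = k + 1
    rw [sumA_cons, ih]
    rfl

lemma sumA_append (l1 l2 : List (Entry K A)) :
    sumA K A (l1 ++ l2) = sumA K A l1 + sumA K A l2 := by
  induction l1 with
  | nil => simp [sumA]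
  | cons e l ih =>
    show sumA K A (e :: (l ++ l2)) = sumA K A (e :: l) + sumA K A l2
    rw [sumA_cons, sumA_cons, ih]
    omega

lemma gammaAux_replicate (k : ℕ) :
    gammaAux K A (List.replicate k (idE K A)) =
      tmap K A (sumA K A (List.replicate k (idE K A)))
        (List.replicate k (idE K A)).length := by
  induction k with
  | zero =>
    show LinearMap.id = tmap K A 0 0
    rw [tmap_self]
  | succ k ih =>
    show gammaAux K A (idE K A :: List.replicate k (idE K A)) =
      tmap K A (sumA K A (List.replicate k (idE K A)) + 1)
        ((List.replicate k (idE K A)).length + 1)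
    rw [gammaAux_cons_idE, ih, ← tmap_succ]

lemma claimA (j : ℕ) : ∀ i : ℕ,
    gammaAux K A (List.replicate i (idE K A) ++ ⟨2, piC K A⟩ :: List.replicate j (idE K A)) =
      tmap K A (j + 1 + i)
          (List.replicate i (idE K A) ++ ⟨2, piC K A⟩ :: List.replicate j (idE K A)).length ∘ₗ
        face K A (j + 1 + i) i ∘ₗ
          tmap K A
            (sumA K A (List.replicate i (idE K A) ++ ⟨2, piC K A⟩ :: List.replicate j (idE K A)))
            (j + 1 + i + 1) := by
  intro i
  induction i with
  | zero =>
    have hs : sumA K A (List.replicate j (idE K A)) = j := sumA_replicate j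
    show gammaAux K A (⟨1 + 1, piC K A⟩ :: List.replicate j (idE K A)) =
      tmap K A (j + 1 + 0) ((List.replicate j (idE K A)).length + 1) ∘ₗ
        face K A (j + 1 + 0) 0 ∘ₗ
          tmap K A (sumA K A (List.replicate j (idE K A)) + 1 + 1) (j + 1 + 0 + 1)
    rw [gammaAux_cons, innerC_piC, gammaAux_replicate, consume_one_mul', face_tmap,
      ← LinearMap.comp_assoc, tmap_comp₁ _ (by omega : sumA K A (List.replicate j (idE K A)) + 1 = j + 1 + 0)]
    rw [← tmap_succ]
    rfl
  | succ i ih =>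
    show gammaAux K A (idE K A ::
        (List.replicate i (idE K A) ++ ⟨2, piC K A⟩ :: List.replicate j (idE K A))) =
      tmap K A (j + 1 + i + 1)
          ((List.replicate i (idE K A) ++ ⟨2, piC K A⟩ :: List.replicate j (idE K A)).length + 1) ∘ₗ
        face K A (j + 1 + i + 1) (i + 1) ∘ₗ
          tmap K A
            (sumA K A (List.replicate i (idE K A) ++ ⟨2, piC K A⟩ :: List.replicate j (idE K A)) + 1)
            (j + 1 + i + 1 + 1)
    rw [gammaAux_cons_idE, ih, LinearMap.lTensor_comp, LinearMap.lTensor_comp,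
      ← tmap_succ, ← tmap_succ, ← face_succ_succ]
    rfl

lemma tmap_comp₁' {a b : ℕ} (c : ℕ) (h : a = b) {W : Type w} [AddCommGroup W] [Module K W]
    (X : W →ₗ[K] Tpow K A a) :
    tmap K A b c ∘ₗ (tmap K A a b ∘ₗ X) = tmap K A a c ∘ₗ X := by
  rw [← LinearMap.comp_assoc, tmap_comp₁ _ h]

lemma lemL2 (m i j : ℕ) (hij : i + j = m) (f : Tpow K A (m + 1 + 1) →ₗ[K] A) :
    gammaD K A (m + 1) f
        (List.replicate i (idE K A) ++ ⟨2, piC K A⟩ :: List.replicate j (idE K A))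
        (m + 1 + 2) =
      f ∘ₗ face K A (m + 1 + 1) (i + 1) := by
  have hlen : (List.replicate i (idE K A) ++ ⟨2, piC K A⟩ :: List.replicate j (idE K A)).length
      = m + 1 := by
    rw [List.length_append, List.length_replicate]
    show i + ((List.replicate j (idE K A)).length + 1) = m + 1
    rw [List.length_replicate]
    omega
  have hsum : sumA K A (List.replicate i (idE K A) ++ ⟨2, piC K A⟩ :: List.replicate j (idE K A))
      = m + 2 := by
    rw [sumA_append, sumA_replicate, sumA_cons (⟨2, piC K A⟩ : Entry K A) (List.replicate j (idE K A)),
      sumA_replicate]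
    show i + (j + 2) = m + 2
    omega
  rw [gammaD, gamma, claimA]
  generalize (List.replicate i (idE K A) ++ ⟨2, piC K A⟩ :: List.replicate j (idE K A)).length = a at hlen ⊢
  generalize sumA K A (List.replicate i (idE K A) ++ ⟨2, piC K A⟩ :: List.replicate j (idE K A)) = b at hsum ⊢
  subst hlen hsum
  rw [show j + 1 + i = m + 1 by omega]
  simp only [tmap_self, LinearMap.id_comp, LinearMap.comp_id]
  rfl

end Aux

/-- For `f ∈ CHⁿ_Hopf(A,A)`, the homotopy-G-algebra differential
`d(f) = π{f} − (−1)^{n−1} f{π}` satisfies `d_CH(f) = (−1)^{n+1} d(f)`, where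
`d_CH(f) = f ∘ d^CB` is the Hopf-Hochschild differential induced from the bar complex
differential (explicitly, `d_CH(f)` is the alternating sum of `f` precomposed with the
face maps `∂ⱼ`, `0 ≤ j ≤ n+1`). -/
theorem hopf_hochschild_differential_eq_hg_differential
    {K A H : Type u} [Field K] [Ring A] [Algebra K A] [Ring H] [Bialgebra K H]
    (M : ModAlg K A H) (n : ℕ) (hn : 1 ≤ n)
    (f : Tpow K A (n + 1) →ₗ[K] A) (hf : IsXLinear K A H M.act n f) :
    f ∘ₗ barDiff K A (n + 1) = (-1 : K) ^ (n + 1) • hgDiff K A n f := by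
  obtain ⟨m, rfl⟩ : ∃ m, n = m + 1 := ⟨n - 1, by omega⟩
  rw [barDiff, comp_sum_smul, Finset.sum_range_succ, Finset.sum_range_succ']
  rw [hgDiff, lemL3 M m f hf, lemL1 M m f hf]
  rw [show (∑ i ∈ Finset.range (m + 1), (-1 : K) ^ i •
        gammaD K A (m + 1) f
          (List.replicate i (idE K A) ++ ⟨2, piC K A⟩ :: List.replicate (m + 1 - 1 - i) (idE K A))
          (m + 1 + 2)) =
      ∑ i ∈ Finset.range (m + 1), (-1 : K) ^ i • (f ∘ₗ face K A (m + 1 + 1) (i + 1)) from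
    Finset.sum_congr rfl (fun i hi => by
      rw [lemL2 m i (m + 1 - 1 - i) (by
        have := Finset.mem_range.mp hi
        omega) f])]
  have h2 : ((-1 : K) ^ (m + 1 + 1)) * ((-1 : K) ^ (m + 1 - 1)) = 1 := by
    rw [← pow_add]
    refine Even.neg_one_pow ?_
    refine ⟨m + 1, ?_⟩
    omega
  rw [smul_sub, smul_add, smul_smul, smul_smul, h2, one_smul, one_smul]
  have hsumneg : ∑ i ∈ Finset.range (m + 1),
        ((-1 : K)) ^ (i + 1) • (f ∘ₗ face K A (m + 1 + 1) (i + 1)) =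
      -∑ i ∈ Finset.range (m + 1), ((-1 : K)) ^ i • (f ∘ₗ face K A (m + 1 + 1) (i + 1)) := by
    rw [← Finset.sum_neg_distrib]
    refine Finset.sum_congr rfl fun i _ => ?_
    rw [pow_succ, mul_neg_one]
    exact neg_smul ((-1 : K) ^ i) (f ∘ₗ face K A (m + 1 + 1) (i + 1))
  rw [hsumneg, pow_zero, one_smul]
  abel
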